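/- Let w₁,…,w_N ∈ Λ* ⊂ t* with dim t* = k, and for index sets I ⊆ {1,…,N} let W_I = { Σ_{i∈I} c_i w_i : c_i ≥ 0 } be the associated cone. Call W_I a wall if the family (w_i)_{i∈I} has rank k−1 and I contains every index i with w_i ∈ W_I. Then τ ∈ t* fails to be regular for the collection (w_ν) if and only if τ lies in some wall; equivalently, the set of non-regular elements equals the union of all walls. -/

import Mathlib

open Module Submodule


/-- Let `w₁, …, w_N ∈ Λ* ⊂ t*` span `t* = ℝ^k` (`k > 0`), and for an
index set `I` let `W_I = {∑_{i∈I} c i • w i | c i ≥ 0}` be the associated cone.  `W_I`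
is a *wall* if the family `(w i)_{i∈I}` has rank `k - 1` and `I` is complete (it
contains every index `i` with `w i ∈ W_I`).  Then `τ ∈ t*` fails to be regular for
`(w ν)` if and only if `τ` lies in some wall. -/
theorem nonregular_iff_in_wall
    (k N : ℕ) (hk : 0 < k) (w : Fin N → EuclideanSpace ℝ (Fin k))
    (hspan : Submodule.span ℝ (Set.range w) = ⊤)
    (τ : EuclideanSpace ℝ (Fin k)) :
    (¬ ∀ (J : Finset (Fin N)) (a : Fin N → ℝ),
        (∀ j ∈ J, 0 < a j) → τ = ∑ j ∈ J, a j • w j →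
        Submodule.span ℝ (w '' ↑J) = ⊤) ↔
      ∃ I : Finset (Fin N),
        (Module.finrank ℝ (Submodule.span ℝ (w '' ↑I)) = k - 1 ∧
          ∀ i : Fin N,
            (∃ c : Fin N → ℝ, (∀ l, 0 ≤ c l) ∧ w i = ∑ l ∈ I, c l • w l) → i ∈ I) ∧
        ∃ c : Fin N → ℝ, (∀ l, 0 ≤ c l) ∧ τ = ∑ l ∈ I, c l • w l := by
  classical
  have htop : finrank ℝ (EuclideanSpace ℝ (Fin k)) = k := finrank_euclideanSpace_fin
  constructor
  · intro h
    push_neg at h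
    obtain ⟨J, a, hapos, hτ, hJ⟩ := h
    set F : Finset (Fin N) → ℕ := fun S => finrank ℝ (span ℝ (w '' ↑S)) with hF
    have hle : ∀ S, F S ≤ k := fun S => htop ▸ (span ℝ (w '' ↑S)).finrank_le
    have hfull : ∀ S : Finset (Fin N), F S = k → span ℝ (w '' ↑S) = ⊤ := by
      intro S hS
      exact Submodule.eq_top_of_finrank_eq (by rw [htop]; exact hS)
    have hFJ : F J ≤ k - 1 := by
      have h1 : F J ≠ k := fun h' => hJ (hfull J h')
      have := hle J
      omega
    let T : Finset (Finset (Fin N)) :=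
      Finset.univ.filter (fun S => J ⊆ S ∧ F S ≤ k - 1)
    have hJT : J ∈ T := by simp [T, hFJ]
    obtain ⟨I', hI'T, hmax⟩ := T.exists_max_image F ⟨J, hJT⟩
    have hI' : J ⊆ I' ∧ F I' ≤ k - 1 := by simpa [T] using hI'T
    have hFI' : F I' = k - 1 := by
      by_contra hne
      have hlt : F I' < k - 1 := lt_of_le_of_ne hI'.2 hne
      have hnt : span ℝ (w '' ↑I') ≠ ⊤ := by
        intro ht
        have : F I' = k := by rw [hF]; simp only; rw [ht, finrank_top, htop]
        omega
      have hex : ∃ i, w i ∉ span ℝ (w '' ↑I') := by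
        by_contra hall; push_neg at hall
        apply hnt
        rw [eq_top_iff, ← hspan, span_le]
        rintro _ ⟨i, rfl⟩; exact hall i
      obtain ⟨i, hi⟩ := hex
      have hwi0 : w i ≠ 0 := fun h0 => hi (h0 ▸ (span ℝ (w '' ↑I')).zero_mem)
      have hins : span ℝ (w '' ↑(insert i I')) = (ℝ ∙ w i) ⊔ span ℝ (w '' ↑I') := by
        rw [Finset.coe_insert, Set.image_insert_eq, Submodule.span_insert]
      have hsub : span ℝ (w '' ↑I') < span ℝ (w '' ↑(insert i I')) := by
        rw [hins]
        refine lt_of_le_of_ne le_sup_right fun heq => hi ?_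
        rw [heq]
        exact Submodule.mem_sup_left (Submodule.mem_span_singleton_self (w i))
      have h1 : F I' < F (insert i I') := Submodule.finrank_lt_finrank_of_lt hsub
      have h2 : F (insert i I') ≤ F I' + 1 := by
        rw [hF]; simp only; rw [hins]
        calc finrank ℝ ((ℝ ∙ w i) ⊔ span ℝ (w '' ↑I') : Submodule ℝ _)
            ≤ finrank ℝ (ℝ ∙ w i) + finrank ℝ (span ℝ (w '' ↑I')) := by
              have := Submodule.finrank_sup_add_finrank_inf_eq (ℝ ∙ w i) (span ℝ (w '' ↑I'))
              omega
          _ = finrank ℝ (span ℝ (w '' ↑I')) + 1 := by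
              rw [finrank_span_singleton hwi0]; omega
      have hmem : insert i I' ∈ T := by
        simp only [T, Finset.mem_filter, Finset.mem_univ, true_and]
        exact ⟨hI'.1.trans (Finset.subset_insert i I'), by omega⟩
      have := hmax _ hmem
      omega
    let I : Finset (Fin N) := Finset.univ.filter (fun i => w i ∈ span ℝ (w '' ↑I'))
    have hI'I : I' ⊆ I := by
      intro i hi
      simp only [I, Finset.mem_filter, Finset.mem_univ, true_and]
      exact subset_span ⟨i, hi, rfl⟩
    have hspanI : span ℝ (w '' ↑I) = span ℝ (w '' ↑I') := by
      apply le_antisymm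
      · rw [span_le]
        rintro _ ⟨i, hiI, rfl⟩
        simpa only [I, Finset.mem_coe, Finset.mem_filter, Finset.mem_univ, true_and, SetLike.mem_coe] using hiI
      · exact span_mono (Set.image_mono (f := w) hI'I)
    have hJI : J ⊆ I := hI'.1.trans hI'I
    refine ⟨I, ⟨by rw [hspanI]; exact hFI', ?_⟩, ?_⟩
    · rintro i ⟨c, hc, hw⟩
      simp only [I, Finset.mem_filter, Finset.mem_univ, true_and]
      rw [← hspanI]
      rw [hw]
      exact Submodule.sum_mem _ fun l hl =>
        Submodule.smul_mem _ _ (subset_span ⟨l, hl, rfl⟩)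
    · refine ⟨fun l => if l ∈ J then a l else 0, fun l => ?_, ?_⟩
      · by_cases hl : l ∈ J
        · simp [hl]; exact le_of_lt (hapos l hl)
        · simp [hl]
      · rw [hτ]
        have : ∀ l, (if l ∈ J then a l else 0) • w l
            = if l ∈ J then a l • w l else 0 := by
          intro l; by_cases hl : l ∈ J <;> simp [hl]
        simp only [this]
        rw [Finset.sum_ite_mem]
        congr 1
        exact (Finset.inter_eq_right.mpr hJI).symm
  · rintro ⟨I, ⟨hrk, _⟩, c, hc, hτ⟩ h
    have hKsum : τ = ∑ j ∈ I.filter (fun l => c l ≠ 0), c j • w j := by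
      rw [hτ]
      symm
      apply Finset.sum_filter_of_ne
      intro l _ h0 h1
      exact h0 (by rw [h1, zero_smul])
    have := h (I.filter (fun l => c l ≠ 0)) c
      (fun j hj => lt_of_le_of_ne (hc j) (Ne.symm (Finset.mem_filter.mp hj).2)) hKsum
    have hle : span ℝ (w '' ↑(I.filter (fun l => c l ≠ 0))) ≤ span ℝ (w '' ↑I) :=
      span_mono (Set.image_mono (f := w) (Finset.coe_subset.mpr (Finset.filter_subset _ _)))
    rw [this] at hle
    have : k ≤ k - 1 := by
      calc k = finrank ℝ (⊤ : Submodule ℝ (EuclideanSpace ℝ (Fin k))) := by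
              rw [finrank_top, htop]
        _ ≤ finrank ℝ (span ℝ (w '' ↑I)) := Submodule.finrank_mono hle
        _ = k - 1 := hrk
    omega
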